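/- (Theorem 3, Case 2.) Let Ξ > 0, q_c > 0, q_max > 0 and γ_th > 0 with γ_th/Ξ < q_max. Define F_EE(q) = ln(1 + qΞ) / ((q + q_c)·ln 2) and F̂_EE(q) = ((q + q_c)/(1 + qΞ))·Ξ − ln(1 + qΞ) for q ≥ 0, and suppose F̂_EE(q_max) < 0, with q_o ∈ (0, q_max) the unique zero of F̂_EE. Then F_EE is increasing on (0, q_o] and decreasing on [q_o, q_max], and q* = max{q_o, γ_th/Ξ} maximizes F_EE over the feasible set {q : γ_th/Ξ ≤ q ≤ q_max}; that is, F_EE(q) ≤ F_EE(q*) for every q with γ_th/Ξ ≤ q ≤ q_max. -/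

import Mathlib

open Real

/-- Energy efficiency `F_EE(q) = ln(1 + qΞ) / ((q + q_c)·ln 2)`. -/
noncomputable def FEE (Ξ q_c q : ℝ) : ℝ :=
  Real.log (1 + q * Ξ) / ((q + q_c) * Real.log 2)

/-- Auxiliary function `F̂_EE(q) = ((q + q_c)/(1 + qΞ))·Ξ − ln(1 + qΞ)`. -/
noncomputable def FhatEE (Ξ q_c q : ℝ) : ℝ :=
  (q + q_c) / (1 + q * Ξ) * Ξ - Real.log (1 + q * Ξ)

lemma fhat_hasDeriv (Ξ q_c q : ℝ) (hne : (1 : ℝ) + q * Ξ ≠ 0) :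
    HasDerivAt (FhatEE Ξ q_c)
      ((1 * (1 + q * Ξ) - (q + q_c) * Ξ) / (1 + q * Ξ) ^ 2 * Ξ - Ξ / (1 + q * Ξ)) q := by
  have h1 : HasDerivAt (fun q : ℝ => q + q_c) 1 q := (hasDerivAt_id q).add_const q_c
  have h2 : HasDerivAt (fun q : ℝ => 1 + q * Ξ) Ξ q := by
    simpa using ((hasDerivAt_id q).mul_const Ξ).const_add 1
  have hd := (h1.div h2 hne).mul_const Ξ
  have hl := h2.log hne
  exact hd.sub hl

lemma fee_hasDeriv (Ξ q_c q : ℝ) (hne : (1 : ℝ) + q * Ξ ≠ 0)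
    (hden : (q + q_c) * Real.log 2 ≠ 0) :
    HasDerivAt (FEE Ξ q_c)
      (Real.log 2 * FhatEE Ξ q_c q / ((q + q_c) * Real.log 2) ^ 2) q := by
  have h1 : HasDerivAt (fun q : ℝ => (q + q_c) * Real.log 2) (1 * Real.log 2) q :=
    ((hasDerivAt_id q).add_const q_c).mul_const _
  have h2 : HasDerivAt (fun q : ℝ => 1 + q * Ξ) Ξ q := by
    simpa using ((hasDerivAt_id q).mul_const Ξ).const_add 1
  have hl := h2.log hne
  have := hl.div h1 hden
  refine this.congr_deriv ?_
  unfold FhatEE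
  ring

/-- Theorem 3, Case 2: if `F̂_EE(q_max) < 0` and `q_o ∈ (0, q_max)` is the
(unique) zero of `F̂_EE`, then `F_EE` is increasing on `(0, q_o]`, decreasing on
`[q_o, q_max]`, and `q* = max {q_o, γ_th/Ξ}` maximizes `F_EE` over the feasible set
`{q : γ_th/Ξ ≤ q ≤ q_max}`. -/
theorem FEE_maximizer_case2 (Ξ q_c q_max γ_th : ℝ) (hΞ : 0 < Ξ) (hqc : 0 < q_c)
    (hqm : 0 < q_max) (hγ : 0 < γ_th) (hfeas : γ_th / Ξ < q_max)
    (hneg : FhatEE Ξ q_c q_max < 0) (q_o : ℝ) (hqo : q_o ∈ Set.Ioo 0 q_max)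
    (hzero : FhatEE Ξ q_c q_o = 0) :
    MonotoneOn (FEE Ξ q_c) (Set.Ioc 0 q_o) ∧
      AntitoneOn (FEE Ξ q_c) (Set.Icc q_o q_max) ∧
      ∀ q : ℝ, γ_th / Ξ ≤ q → q ≤ q_max →
        FEE Ξ q_c q ≤ FEE Ξ q_c (max q_o (γ_th / Ξ)) := by
  obtain ⟨hqo0, hqom⟩ := hqo
  have hpos : ∀ q : ℝ, 0 ≤ q → (0:ℝ) < 1 + q * Ξ := fun q hq => by nlinarith
  -- F̂ is strictly antitone on [0, q_max]
  have hanti : StrictAntiOn (FhatEE Ξ q_c) (Set.Icc 0 q_max) := by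
    apply strictAntiOn_of_deriv_neg (convex_Icc 0 q_max)
    · intro q hq
      exact (fhat_hasDeriv Ξ q_c q (ne_of_gt (hpos q hq.1))).continuousAt.continuousWithinAt
    · intro q hq
      rw [interior_Icc] at hq
      have h1 : (0:ℝ) < 1 + q * Ξ := hpos q hq.1.le
      rw [(fhat_hasDeriv Ξ q_c q (ne_of_gt h1)).deriv]
      have key : (1 * (1 + q * Ξ) - (q + q_c) * Ξ) / (1 + q * Ξ) ^ 2 * Ξ - Ξ / (1 + q * Ξ)
          = -(Ξ ^ 2 * (q + q_c)) / (1 + q * Ξ) ^ 2 := by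
        field_simp
        ring
      rw [key]
      apply div_neg_of_neg_of_pos
      · have : 0 < Ξ ^ 2 * (q + q_c) := mul_pos (pow_pos hΞ 2) (by linarith [hq.1])
        linarith
      · positivity
  have hfhat_pos : ∀ q ∈ Set.Ioo (0:ℝ) q_o, 0 < FhatEE Ξ q_c q := by
    intro q hq
    have := hanti ⟨hq.1.le, (hq.2.trans hqom).le⟩ ⟨hqo0.le, hqom.le⟩ hq.2
    linarith [hzero ▸ this]
  have hfhat_neg : ∀ q ∈ Set.Ioo q_o q_max, FhatEE Ξ q_c q < 0 := by
    intro q hq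
    have := hanti ⟨hqo0.le, hqom.le⟩ ⟨(hqo0.trans hq.1).le, hq.2.le⟩ hq.1
    linarith [hzero ▸ this]
  have hlog2 : (0:ℝ) < Real.log 2 := Real.log_pos (by norm_num)
  have hcont : ∀ q : ℝ, 0 < q → ContinuousWithinAt (FEE Ξ q_c) (Set.univ) q := by
    intro q hq
    have hden : (q + q_c) * Real.log 2 ≠ 0 := by positivity
    exact (fee_hasDeriv Ξ q_c q (ne_of_gt (hpos q hq.le)) hden).continuousAt.continuousWithinAt
  have hderiv : ∀ q : ℝ, 0 < q → HasDerivAt (FEE Ξ q_c)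
      (Real.log 2 * FhatEE Ξ q_c q / ((q + q_c) * Real.log 2) ^ 2) q := by
    intro q hq
    have hden : (q + q_c) * Real.log 2 ≠ 0 :=
      ne_of_gt (mul_pos (by linarith) hlog2)
    exact fee_hasDeriv Ξ q_c q (ne_of_gt (hpos q hq.le)) hden
  have hmono : MonotoneOn (FEE Ξ q_c) (Set.Ioc 0 q_o) := by
    apply monotoneOn_of_deriv_nonneg (convex_Ioc 0 q_o)
    · intro q hq
      exact ((hcont q hq.1).mono (Set.subset_univ _))
    · intro q hq
      rw [interior_Ioc] at hq
      exact (hderiv q hq.1).differentiableAt.differentiableWithinAt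
    · intro q hq
      rw [interior_Ioc] at hq
      rw [(hderiv q hq.1).deriv]
      apply div_nonneg
      · exact mul_nonneg hlog2.le (hfhat_pos q hq).le
      · positivity
  have hantit : AntitoneOn (FEE Ξ q_c) (Set.Icc q_o q_max) := by
    apply antitoneOn_of_deriv_nonpos (convex_Icc q_o q_max)
    · intro q hq
      exact ((hcont q (hqo0.trans_le hq.1)).mono (Set.subset_univ _))
    · intro q hq
      rw [interior_Icc] at hq
      exact (hderiv q (hqo0.trans hq.1)).differentiableAt.differentiableWithinAt
    · intro q hq
      rw [interior_Icc] at hq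
      rw [(hderiv q (hqo0.trans hq.1)).deriv]
      apply div_nonpos_of_nonpos_of_nonneg
      · exact mul_nonpos_of_nonneg_of_nonpos hlog2.le (hfhat_neg q hq).le
      · positivity
  refine ⟨hmono, hantit, ?_⟩
  intro q hq1 hq2
  have hγΞ : 0 < γ_th / Ξ := div_pos hγ hΞ
  by_cases h : q ≤ q_o
  · have hmax : max q_o (γ_th / Ξ) = q_o := max_eq_left (hq1.trans h)
    rw [hmax]
    exact hmono ⟨hγΞ.trans_le hq1, h⟩ ⟨hqo0, le_refl _⟩ h
  · push_neg at h
    have hstar_le : max q_o (γ_th / Ξ) ≤ q := max_le h.le hq1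
    have hstar_mem : max q_o (γ_th / Ξ) ∈ Set.Icc q_o q_max :=
      ⟨le_max_left _ _, max_le hqom.le hfeas.le⟩
    exact hantit hstar_mem ⟨h.le, hq2⟩ hstar_le
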